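/- Let f, g, h be elements of a commutative ℂ-algebra (e.g., complex-valued functions). Let Q be the 3×3 matrix with rows (1, 0, −1), (i, 0, i), (0, −1, 0), and let M be the 3×3 matrix with rows (i·h, (g + i·f)/2, 0), (−(g − i·f), 0, g + i·f), (0, −(g − i·f)/2, −i·h) (this is 𝔰y𝔪²(C) for C = (1/2)·[[i·h, g + i·f], [−(g − i·f), −i·h]]). Then Q·M·Q⁻¹ equals the skew-symmetric matrix with rows (0, h, −g), (−h, 0, f), (g, −f, 0). Consequently, if Y : ℝ → ℂ³ is differentiable and satisfies Y' = M·Y (with f, g, h continuous functions), then Z := Q·Y satisfies the orthogonal system Z' = Z × Ω with Ω = (f, g, h)ᵀ. -/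

import Mathlib

/-- Lemma (gaugemat): the constant gauge Q identifies the symmetric square of a
2×2 traceless system with an 𝔰𝔬(3) system Z' = Z × Ω. -/
theorem gauge_sym2_to_so3
    (f g h : ℝ → ℂ) (hf : Continuous f) (hg : Continuous g) (hh : Continuous h)
    (Q : Matrix (Fin 3) (Fin 3) ℂ)
    (hQ : Q = !![1, 0, -1; Complex.I, 0, Complex.I; 0, -1, 0])
    (M : ℝ → Matrix (Fin 3) (Fin 3) ℂ)
    (hM : ∀ x, M x = !![Complex.I * h x, (g x + Complex.I * f x) / 2, 0;
        -(g x - Complex.I * f x), 0, g x + Complex.I * f x;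
        0, -(g x - Complex.I * f x) / 2, -Complex.I * h x]) :
    (∀ x, Q * M x * Q⁻¹ = !![0, h x, -(g x); -(h x), 0, f x; g x, -(f x), 0]) ∧
    (∀ Y : ℝ → Fin 3 → ℂ, (∀ i, Differentiable ℝ (fun t => Y t i)) →
      (∀ x i, deriv (fun t => Y t i) x = ((M x).mulVec (Y x)) i) →
      ∀ x, deriv (fun t => (Q.mulVec (Y t)) 0) x
              = (Q.mulVec (Y x)) 1 * h x - (Q.mulVec (Y x)) 2 * g x ∧
           deriv (fun t => (Q.mulVec (Y t)) 1) x
              = (Q.mulVec (Y x)) 2 * f x - (Q.mulVec (Y x)) 0 * h x ∧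
           deriv (fun t => (Q.mulVec (Y t)) 2) x
              = (Q.mulVec (Y x)) 0 * g x - (Q.mulVec (Y x)) 1 * f x) := by
  have hdet : IsUnit Q.det := by
    rw [hQ]
    simp [Matrix.det_fin_three, Complex.I_ne_zero, isUnit_iff_ne_zero]
  constructor
  · intro x
    have key : Q * M x = !![0, h x, -(g x); -(h x), 0, f x; g x, -(f x), 0] * Q := by
      rw [hQ, hM x]
      ext i j
      fin_cases i <;> fin_cases j <;>
        simp [Matrix.mul_apply, Fin.sum_univ_three] <;> ring_nf <;>
        simp [Complex.I_sq] <;> ring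
    rw [key, Matrix.mul_nonsing_inv_cancel_right _ _ hdet]
  · intro Y hdiff hY' x
    have hv : ∀ t, (Q.mulVec (Y t)) 0 = Y t 0 - Y t 2 ∧
        (Q.mulVec (Y t)) 1 = Complex.I * Y t 0 + Complex.I * Y t 2 ∧
        (Q.mulVec (Y t)) 2 = -Y t 1 := by
      intro t
      refine ⟨?_, ?_, ?_⟩ <;>
        simp [hQ, Matrix.mulVec, dotProduct, Fin.sum_univ_three] <;> ring
    have e0 : ∀ t, (fun t => (Q.mulVec (Y t)) 0) t = Y t 0 - Y t 2 := fun t => (hv t).1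
    have e1 : ∀ t, (fun t => (Q.mulVec (Y t)) 1) t
        = Complex.I * Y t 0 + Complex.I * Y t 2 := fun t => (hv t).2.1
    have e2 : ∀ t, (fun t => (Q.mulVec (Y t)) 2) t = -Y t 1 := fun t => (hv t).2.2
    have d0 := (hdiff 0).differentiableAt (x := x)
    have d1 := (hdiff 1).differentiableAt (x := x)
    have d2 := (hdiff 2).differentiableAt (x := x)
    have hm0 := hY' x 0
    have hm1 := hY' x 1
    have hm2 := hY' x 2
    rw [hM x] at hm0 hm1 hm2
    simp [Matrix.mulVec, dotProduct, Fin.sum_univ_three] at hm0 hm1 hm2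
    refine ⟨?_, ?_, ?_⟩
    · rw [funext e0, deriv_fun_sub d0 d2, hm0, hm2, (hv x).2.1, (hv x).2.2]
      ring
    · rw [funext e1]
      rw [deriv_fun_add ((d0.const_mul _)) ((d2.const_mul _)), deriv_const_mul _ d0,
        deriv_const_mul _ d2, hm0, hm2, (hv x).1, (hv x).2.2]
      ring_nf
      simp [Complex.I_sq]
      ring
    · rw [funext e2, deriv.fun_neg, hm1, (hv x).1, (hv x).2.1]
      ring
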